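/- Let F and F' be forests on the same finite vertex set V with the same degree sequence, and suppose F has at least one edge. If F and F' have no common trimmable leaf (i.e., no leaf has the same neighbor in F as in F'), then there exist four pairwise distinct vertices a,b,c,d with ab, cd ∈ E(F) and ac, bd ∉ E(F) such that the 2-switch G' of F at (a,b;c,d) is a forest and some leaf has the same neighbor in G' as in F'. -/

import Mathlib

open SimpleGraph

/-- Four pairwise distinct vertices `a,b,c,d` with `ab, cd ∈ E(G)` and `ac, bd ∉ E(G)`:
the condition under which the 2-switch of `G` at `(a,b;c,d)` is performed. -/
def Switchable {V : Type*} (G : SimpleGraph V) (a b c d : V) : Prop :=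
  a ≠ b ∧ a ≠ c ∧ a ≠ d ∧ b ≠ c ∧ b ≠ d ∧ c ≠ d ∧
    G.Adj a b ∧ G.Adj c d ∧ ¬ G.Adj a c ∧ ¬ G.Adj b d

/-- The 2-switch of `G` at `(a,b;c,d)`: the graph on `V` with edge set
`(E(G) \ {ab, cd}) ∪ {ac, bd}`. -/
def twoSwitch {V : Type*} (G : SimpleGraph V) (a b c d : V) : SimpleGraph V :=
  SimpleGraph.fromEdgeSet ((G.edgeSet \ {s(a, b), s(c, d)}) ∪ {s(a, c), s(b, d)})

/-- `G'` is obtained from `G` by a 2-switch. -/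
def ObtainedByTwoSwitch {V : Type*} (G G' : SimpleGraph V) : Prop :=
  ∃ a b c d : V, Switchable G a b c d ∧ G' = twoSwitch G a b c d


private lemma acyclic_mono {V : Type*} {G H : SimpleGraph V} (hle : H ≤ G)
    (hG : G.IsAcyclic) : H.IsAcyclic :=
  fun _v c hc => hG (c.mapLe hle) (hc.mapLe hle)

private lemma reachable_eq_of_isolated {V : Type*} {G : SimpleGraph V} {x : V}
    (hx : ∀ z, ¬ G.Adj x z) {y : V} (h : G.Reachable x y) : y = x := by
  obtain ⟨w⟩ := h
  cases w with
  | nil => rfl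
  | cons h' _ => exact absurd h' (hx _)

private lemma component_pair {V : Type*} {G : SimpleGraph V} {x y : V}
    (hx : G.neighborSet x = {y}) (hy : G.neighborSet y = {x}) :
    ∀ v, G.Reachable x v → v = x ∨ v = y := by
  intro v h
  classical
  obtain ⟨W⟩ := h
  obtain ⟨P, hP⟩ := W.toPath
  cases P with
  | nil => exact Or.inl rfl
  | @cons _ z _ h1 Q =>
    have hz : z = y := by
      have : z ∈ G.neighborSet x := h1
      rwa [hx, Set.mem_singleton_iff] at this
    rw [Walk.cons_isPath_iff] at hP
    cases Q with
    | nil => exact Or.inr hz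
    | @cons _ z2 _ h2 Q2 =>
      have hz2 : z2 = x := by
        have h2' : G.Adj y z2 := hz ▸ h2
        have : z2 ∈ G.neighborSet y := h2'
        rwa [hy, Set.mem_singleton_iff] at this
      exact absurd (by rw [← hz2]; simp [Walk.support_cons, Q2.start_mem_support] :
        x ∈ (Walk.cons h2 Q2).support) hP.2

private lemma exists_leaf {V : Type*} [Fintype V] {G : SimpleGraph V} (hG : G.IsAcyclic)
    {v : V} (hv : (G.neighborSet v).Nonempty) :
    ∃ w, G.Reachable v w ∧ ∃ p, G.neighborSet w = {p} := by
  classical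
  have : Nonempty (Σ w, G.Path w v) := ⟨⟨v, ⟨Walk.nil, Walk.IsPath.nil⟩⟩⟩
  obtain ⟨⟨w, P, hP⟩, hmax⟩ := Finite.exists_max (fun q : Σ w, G.Path w v => q.2.1.length)
  have hlen : 0 < P.length := by
    by_contra h0
    have h0' : P.length = 0 := by omega
    have hwv : w = v := P.eq_of_length_eq_zero h0'
    subst hwv
    obtain ⟨z, hz⟩ := hv
    rw [mem_neighborSet] at hz
    have hpath : (Walk.cons hz.symm Walk.nil : G.Walk z w).IsPath := by
      simp [Walk.cons_isPath_iff, hz.ne']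
    have := hmax ⟨z, ⟨Walk.cons hz.symm Walk.nil, hpath⟩⟩
    simp [h0'] at this
  cases P with
  | nil => simp at hlen
  | @cons _ p _ h Q =>
    rw [Walk.cons_isPath_iff] at hP
    refine ⟨w, ⟨(Walk.cons h Q).reverse⟩, p, ?_⟩
    ext z
    rw [mem_neighborSet, Set.mem_singleton_iff]
    constructor
    · intro hz
      by_cases hzs : z ∈ (Walk.cons h Q).support
      · have hzw : z ≠ w := hz.ne'
        have hzQ : z ∈ Q.support := by simpa [Walk.support_cons, hzw] using hzs
        by_contra hzp
        have t1 : (Walk.cons hz Walk.nil : G.Walk w z).IsPath := by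
          simp [Walk.cons_isPath_iff, hz.ne]
        have t2 : (Walk.cons h (Q.takeUntil z hzQ)).IsPath := by
          rw [Walk.cons_isPath_iff]
          exact ⟨hP.1.takeUntil _, fun hw => hP.2 (Q.support_takeUntil_subset hzQ hw)⟩
        have heq := hG.path_unique ⟨_, t1⟩ ⟨_, t2⟩
        have hs := congrArg (fun q : G.Path w z => q.1.support) heq
        simp only [Walk.support_cons, Walk.support_nil] at hs
        rw [Walk.support_eq_cons (Q.takeUntil z hzQ)] at hs
        injection hs with _ hs
        injection hs with hs _
        exact hzp hs
      · have t : (Walk.cons hz.symm (Walk.cons h Q)).IsPath := by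
          rw [Walk.cons_isPath_iff]
          exact ⟨by rw [Walk.cons_isPath_iff]; exact hP, hzs⟩
        have := hmax ⟨z, ⟨Walk.cons hz.symm (Walk.cons h Q), t⟩⟩
        simp [Walk.length_cons] at this
    · rintro rfl
      exact h

private lemma reachable_sup_edge {V : Type*} {G : SimpleGraph V} {x y a b : V}
    (h : (G ⊔ fromEdgeSet {s(x, y)}).Reachable a b) :
    G.Reachable a b ∨ (G.Reachable a x ∧ G.Reachable y b) ∨
      (G.Reachable a y ∧ G.Reachable x b) := by
  obtain ⟨W⟩ := h
  induction W with
  | nil => exact Or.inl Reachable.rfl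
  | @cons a c b hadj W ih =>
    rw [sup_adj, fromEdgeSet_adj, Set.mem_singleton_iff] at hadj
    rcases hadj with hG1 | ⟨heq, _⟩
    · rcases ih with h1 | ⟨h1, h2⟩ | ⟨h1, h2⟩
      · exact Or.inl (hG1.reachable.trans h1)
      · exact Or.inr (Or.inl ⟨hG1.reachable.trans h1, h2⟩)
      · exact Or.inr (Or.inr ⟨hG1.reachable.trans h1, h2⟩)
    · rcases Sym2.eq_iff.mp heq with ⟨rfl, rfl⟩ | ⟨rfl, rfl⟩
      · rcases ih with h1 | ⟨h1, h2⟩ | ⟨h1, h2⟩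
        · exact Or.inr (Or.inl ⟨Reachable.rfl, h1⟩)
        · exact Or.inl (h1.symm.trans h2)
        · exact Or.inl h2
      · rcases ih with h1 | ⟨h1, h2⟩ | ⟨h1, h2⟩
        · exact Or.inr (Or.inr ⟨Reachable.rfl, h1⟩)
        · exact Or.inl h2
        · exact Or.inl (h1.symm.trans h2)

private lemma acyclic_sup_edge {V : Type*} {G : SimpleGraph V} {x y : V}
    (hG : G.IsAcyclic) (hr : ¬ G.Reachable x y) :
    (G ⊔ fromEdgeSet {s(x, y)}).IsAcyclic := by
  rw [isAcyclic_iff_forall_edge_isBridge]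
  intro e
  induction e using Sym2.ind with
  | _ a b =>
  intro he
  have hadj : (G ⊔ fromEdgeSet {s(x, y)}).Adj a b := (mem_edgeSet _).mp he
  rw [isBridge_iff]
  change ¬ ((G ⊔ fromEdgeSet {s(x, y)}) \ fromEdgeSet {s(a, b)}).Reachable a b
  intro hreach
  by_cases hcase : s(a, b) = s(x, y)
  · have hle : (G ⊔ fromEdgeSet {s(x, y)}) \ fromEdgeSet {s(a, b)} ≤ G := by
      intro v w hvw
      rw [sdiff_adj] at hvw
      rcases hvw.1 with h | h
      · exact h
      · exact absurd (by rwa [hcase]) hvw.2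
    have hre : G.Reachable a b := hreach.mono hle
    rcases Sym2.eq_iff.mp hcase with ⟨rfl, rfl⟩ | ⟨rfl, rfl⟩
    · exact hr hre
    · exact hr hre.symm
  · have hab : G.Adj a b := by
      rcases sup_adj _ _ _ _ |>.mp hadj with h | h
      · exact h
      · rw [fromEdgeSet_adj, Set.mem_singleton_iff] at h
        exact absurd h.1 hcase
    have hEq : (G ⊔ fromEdgeSet {s(x, y)}) \ fromEdgeSet {s(a, b)}
        = (G \ fromEdgeSet {s(a, b)}) ⊔ fromEdgeSet {s(x, y)} := by
      ext v w
      simp only [sdiff_adj, sup_adj, fromEdgeSet_adj, Set.mem_singleton_iff]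
      constructor
      · rintro ⟨h1 | ⟨h1, h2⟩, h3⟩
        · exact Or.inl ⟨h1, h3⟩
        · exact Or.inr ⟨h1, h2⟩
      · rintro (⟨h1, h3⟩ | ⟨h1, h2⟩)
        · exact ⟨Or.inl h1, h3⟩
        · exact ⟨Or.inr ⟨h1, h2⟩, fun hc => hcase (hc.1.symm.trans h1)⟩
    rw [hEq] at hreach
    have hle : G \ fromEdgeSet {s(a, b)} ≤ G := sdiff_le
    rcases reachable_sup_edge hreach with h1 | ⟨h1, h2⟩ | ⟨h1, h2⟩
    · have hbr := isAcyclic_iff_forall_edge_isBridge.mp hG ((mem_edgeSet _).mpr hab)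
      exact (isBridge_iff.mp hbr) h1
    · exact hr (((h1.mono hle).symm.trans hab.reachable).trans (h2.mono hle).symm)
    · exact hr ((((h1.mono hle).symm.trans hab.reachable).trans (h2.mono hle).symm).symm)

/-- if two forests with the same degree sequence have no common trimmable
leaf, some f-switch of the first creates a trimmable leaf. -/
theorem stmt_4 {V : Type*} [Fintype V] (F F' : SimpleGraph V)
    (hF : F.IsAcyclic) (hF' : F'.IsAcyclic)
    (hdeg : ∀ v : V, (F.neighborSet v).ncard = (F'.neighborSet v).ncard)
    (hne : F.edgeSet.Nonempty)
    (hno : ¬ ∃ ℓ u : V, (F.neighborSet ℓ).ncard = 1 ∧ F.Adj ℓ u ∧ F'.Adj ℓ u) :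
    ∃ a b c d : V, Switchable F a b c d ∧ (twoSwitch F a b c d).IsAcyclic ∧
      ∃ ℓ u : V, ((twoSwitch F a b c d).neighborSet ℓ).ncard = 1 ∧
        (twoSwitch F a b c d).Adj ℓ u ∧ F'.Adj ℓ u := by
  classical
  have leafF' : ∀ v : V, (F.neighborSet v).ncard = 1 → ∃ u', F'.neighborSet v = {u'} := by
    intro v hv
    exact Set.ncard_eq_one.mp (by rw [← hdeg]; exact hv)
  have hv0 : ∃ v : V, (F.neighborSet v).Nonempty := by
    obtain ⟨e, he⟩ := hne
    induction e using Sym2.ind with | _ a b =>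
    exact ⟨a, b, (mem_edgeSet _).mp he⟩
  obtain ⟨v0, hv0⟩ := hv0
  have key : ∃ ℓ u u' : V, F.neighborSet ℓ = {u} ∧ F'.neighborSet ℓ = {u'} ∧ u' ≠ u ∧
      ¬((F.neighborSet u').ncard = 1 ∧ F.Reachable ℓ u') := by
    by_contra hall
    push_neg at hall
    have step : ∀ v n : V, F.neighborSet v = {n} → ∃ m, F'.neighborSet v = {m} ∧ m ≠ n ∧
        (F.neighborSet m).ncard = 1 ∧ F.Reachable v m := by
      intro v n hvn
      have hv1 : (F.neighborSet v).ncard = 1 := by rw [hvn]; exact Set.ncard_singleton _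
      obtain ⟨m, hm⟩ := leafF' v hv1
      have hadjF : F.Adj v n := by rw [← mem_neighborSet, hvn]; rfl
      have hadjF' : F'.Adj v m := by rw [← mem_neighborSet, hm]; rfl
      have hmn : m ≠ n := by
        rintro rfl
        exact hno ⟨v, m, hv1, hadjF, hadjF'⟩
      obtain ⟨h1, h2⟩ := hall v n m hvn hm hmn
      exact ⟨m, hm, hmn, h1, h2⟩
    have hsmall : ∀ x : V, (F.neighborSet x).ncard ≤ 1 := by
      intro x
      by_contra hx
      push_neg at hx
      have hx' : 1 < (F'.neighborSet x).ncard := by rw [← hdeg]; exact hx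
      have hxne : (F'.neighborSet x).Nonempty := by
        rw [← Set.ncard_pos (Set.toFinite _)]; omega
      obtain ⟨w, hwreach, q, hwq⟩ := exists_leaf hF' hxne
      have hw1 : (F.neighborSet w).ncard = 1 := by
        rw [hdeg, hwq]; exact Set.ncard_singleton _
      obtain ⟨n, hn⟩ := Set.ncard_eq_one.mp hw1
      obtain ⟨m, hm, hmn, hm1, _⟩ := step w n hn
      have hm1' : (F'.neighborSet m).ncard = 1 := by rw [← hdeg]; exact hm1
      obtain ⟨m', hm'⟩ := Set.ncard_eq_one.mp hm1'
      have hwm : F'.Adj w m := by rw [← mem_neighborSet, hm]; rfl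
      have hm'w : m' = w := by
        have h3 : w ∈ F'.neighborSet m := hwm.symm
        rw [hm', Set.mem_singleton_iff] at h3; exact h3.symm
      rw [hm'w] at hm'
      rcases component_pair hm hm' x hwreach.symm with h | h
      · rw [h, hdeg, hwq, Set.ncard_singleton] at hx; omega
      · rw [h] at hx; omega
    obtain ⟨ℓ0, _, u0, hu0⟩ := exists_leaf hF hv0
    obtain ⟨m0, hm0, hm0ne, _, hreach0⟩ := step ℓ0 u0 hu0
    have hadj0 : F.Adj ℓ0 u0 := by rw [← mem_neighborSet, hu0]; rfl
    have hu0set : F.neighborSet u0 = {ℓ0} := by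
      have h1 : ℓ0 ∈ F.neighborSet u0 := hadj0.symm
      have h3 : 0 < (F.neighborSet u0).ncard := (Set.ncard_pos (Set.toFinite _)).mpr ⟨_, h1⟩
      obtain ⟨t, ht⟩ := Set.ncard_eq_one.mp (le_antisymm (hsmall u0) h3)
      rw [ht, Set.mem_singleton_iff] at h1
      rw [ht, h1]
    have hadjF'0 : F'.Adj ℓ0 m0 := by rw [← mem_neighborSet, hm0]; rfl
    rcases component_pair hu0 hu0set m0 hreach0 with h | h
    · exact hadjF'0.ne' h
    · exact hm0ne h
  obtain ⟨ℓ, u, u', hNℓ, hN'ℓ, hu'u, hbad⟩ := key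
  have hℓu : F.Adj ℓ u := by rw [← mem_neighborSet, hNℓ]; rfl
  have hℓu' : F'.Adj ℓ u' := by rw [← mem_neighborSet, hN'ℓ]; rfl
  have hu'ne : (F.neighborSet u').Nonempty := by
    rw [← Set.ncard_pos (Set.toFinite _), hdeg, Set.ncard_pos (Set.toFinite _)]
    exact ⟨ℓ, hℓu'.symm⟩
  have hd : ∃ d, F.Adj u' d ∧ ¬(F.deleteEdges {s(u', d)}).Reachable u d := by
    by_cases hreach : F.Reachable ℓ u'
    · have hne1 : (F.neighborSet u').ncard ≠ 1 := fun h => hbad ⟨h, hreach⟩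
      have h2 : 1 < (F.neighborSet u').ncard := by
        have := (Set.ncard_pos (Set.toFinite _)).mpr hu'ne; omega
      have hru : F.Reachable u' u := hreach.symm.trans hℓu.reachable
      obtain ⟨W⟩ := hru
      obtain ⟨P, hP⟩ := W.toPath
      cases P with
      | nil => exact absurd rfl hu'u
      | @cons _ p _ h1 Q =>
        rw [Walk.cons_isPath_iff] at hP
        obtain ⟨d, hd1, hd2⟩ := Set.exists_ne_of_one_lt_ncard h2 p
        rw [mem_neighborSet] at hd1
        refine ⟨d, hd1, fun hR => ?_⟩
        have hs1 : s(u', p) ∉ ({s(u', d)} : Set (Sym2 V)) := by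
          rw [Set.mem_singleton_iff, Sym2.eq_iff]
          rintro (⟨-, h⟩ | ⟨h, -⟩)
          · exact hd2 h.symm
          · exact hd1.ne h
        have hstep : (F.deleteEdges {s(u', d)}).Adj u' p := by
          rw [deleteEdges_adj]; exact ⟨h1, hs1⟩
        have hQ : ∀ e ∈ Q.edges, e ∉ ({s(u', d)} : Set (Sym2 V)) := by
          intro e heQ heS
          rw [Set.mem_singleton_iff] at heS
          rw [heS] at heQ
          exact hP.2 (Q.fst_mem_support_of_mem_edges heQ)
        have hcomb : (F.deleteEdges {s(u', d)}).Reachable u' d :=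
          (hstep.reachable.trans ⟨Q.toDeleteEdges {s(u', d)} hQ⟩).trans hR
        have hbr := isAcyclic_iff_forall_edge_isBridge.mp hF ((mem_edgeSet _).mpr hd1)
        exact (isBridge_iff.mp hbr) hcomb
    · obtain ⟨d, hd1⟩ := hu'ne
      rw [mem_neighborSet] at hd1
      refine ⟨d, hd1, fun hR => ?_⟩
      have h3 : F.Reachable u d := hR.mono (deleteEdges_le _)
      exact hreach (hℓu.reachable.trans (h3.trans hd1.reachable.symm))
  obtain ⟨d, hu'd, hnr⟩ := hd
  have hud : u ≠ d := fun h => hnr (h ▸ Reachable.rfl)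
  have hℓd : ℓ ≠ d := by
    rintro rfl
    have h3 : u' ∈ F.neighborSet ℓ := hu'd.symm
    rw [hNℓ, Set.mem_singleton_iff] at h3
    exact hu'u h3
  have hℓu'ne : ℓ ≠ u' := hℓu'.ne
  have hnadj1 : ¬ F.Adj ℓ u' := by
    intro h
    have h3 : u' ∈ F.neighborSet ℓ := h
    rw [hNℓ, Set.mem_singleton_iff] at h3
    exact hu'u h3
  have hnadj2 : ¬ F.Adj u d := by
    intro h
    apply hnr
    apply Adj.reachable
    rw [deleteEdges_adj]
    refine ⟨h, ?_⟩
    rw [Set.mem_singleton_iff, Sym2.eq_iff]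
    rintro (⟨h1, -⟩ | ⟨-, h2⟩)
    · exact hu'u h1.symm
    · exact hu'd.ne h2.symm
  have hTdef : twoSwitch F ℓ u u' d =
      (F.deleteEdges {s(ℓ, u), s(u', d)} ⊔ fromEdgeSet {s(u, d)}) ⊔ fromEdgeSet {s(ℓ, u')} := by
    ext v w
    have E1 : s(v, w) = s(u, d) → v ≠ w := by
      intro h
      rcases Sym2.eq_iff.mp h with ⟨rfl, rfl⟩ | ⟨rfl, rfl⟩
      · exact hud
      · exact hud.symm
    have E2 : s(v, w) = s(ℓ, u') → v ≠ w := by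
      intro h
      rcases Sym2.eq_iff.mp h with ⟨rfl, rfl⟩ | ⟨rfl, rfl⟩
      · exact hℓu'ne
      · exact hℓu'ne.symm
    simp only [twoSwitch, fromEdgeSet_adj, sup_adj, deleteEdges_adj, Set.mem_union,
      Set.mem_diff, Set.mem_insert_iff, Set.mem_singleton_iff, mem_edgeSet]
    constructor
    · rintro ⟨⟨h1, h2⟩ | (h1 | h1), hvw⟩
      · exact Or.inl (Or.inl ⟨h1, h2⟩)
      · exact Or.inr ⟨h1, hvw⟩
      · exact Or.inl (Or.inr ⟨h1, hvw⟩)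
    · rintro ((⟨h1, h2⟩ | ⟨h1, h2⟩) | ⟨h1, h2⟩)
      · exact ⟨Or.inl ⟨h1, h2⟩, h1.ne⟩
      · exact ⟨Or.inr (Or.inr h1), h2⟩
      · exact ⟨Or.inr (Or.inl h1), h2⟩
  have hG2le : F.deleteEdges {s(ℓ, u), s(u', d)} ≤ F.deleteEdges {s(u', d)} := by
    intro v w hvw
    rw [deleteEdges_adj] at hvw ⊢
    exact ⟨hvw.1, fun hm => hvw.2 (Set.mem_insert_of_mem _ hm)⟩
  have hacyc : (twoSwitch F ℓ u u' d).IsAcyclic := by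
    rw [hTdef]
    apply acyclic_sup_edge
    · apply acyclic_sup_edge
      · exact acyclic_mono (deleteEdges_le _) hF
      · exact fun h => hnr (h.mono hG2le)
    · intro h
      have hiso : ∀ z, ¬ (F.deleteEdges {s(ℓ, u), s(u', d)} ⊔ fromEdgeSet {s(u, d)}).Adj ℓ z := by
        intro z hz
        rcases (sup_adj _ _ _ _).mp hz with h1 | h1
        · rw [deleteEdges_adj] at h1
          have h3 : z ∈ F.neighborSet ℓ := h1.1
          rw [hNℓ, Set.mem_singleton_iff] at h3
          rw [h3] at h1
          exact h1.2 (Set.mem_insert _ _)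
        · rw [fromEdgeSet_adj, Set.mem_singleton_iff, Sym2.eq_iff] at h1
          rcases h1.1 with ⟨h2, -⟩ | ⟨h2, -⟩
          · exact hℓu.ne h2
          · exact hℓd h2
      exact hℓu'ne (reachable_eq_of_isolated hiso h).symm
  have hNT : (twoSwitch F ℓ u u' d).neighborSet ℓ = {u'} := by
    rw [hTdef]
    ext z
    rw [mem_neighborSet, Set.mem_singleton_iff]
    constructor
    · intro hz
      rcases (sup_adj _ _ _ _).mp hz with h1 | h1
      · exfalso
        rcases (sup_adj _ _ _ _).mp h1 with h2 | h2
        · rw [deleteEdges_adj] at h2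
          have h3 : z ∈ F.neighborSet ℓ := h2.1
          rw [hNℓ, Set.mem_singleton_iff] at h3
          rw [h3] at h2
          exact h2.2 (Set.mem_insert _ _)
        · rw [fromEdgeSet_adj, Set.mem_singleton_iff, Sym2.eq_iff] at h2
          rcases h2.1 with ⟨h3, -⟩ | ⟨h3, -⟩
          · exact hℓu.ne h3
          · exact hℓd h3
      · rw [fromEdgeSet_adj, Set.mem_singleton_iff, Sym2.eq_iff] at h1
        rcases h1.1 with ⟨-, h2⟩ | ⟨h2, -⟩
        · exact h2
        · exact absurd h2 hℓu'ne
    · rintro rfl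
      apply (sup_adj _ _ _ _).mpr
      right
      rw [fromEdgeSet_adj]
      exact ⟨Set.mem_singleton _, hℓu'ne⟩
  have hTadj : (twoSwitch F ℓ u u' d).Adj ℓ u' := by
    rw [← mem_neighborSet, hNT]; rfl
  exact ⟨ℓ, u, u', d,
    ⟨hℓu.ne, hℓu'ne, hℓd, fun h => hu'u h.symm, hud, hu'd.ne, hℓu, hu'd, hnadj1, hnadj2⟩,
    hacyc, ℓ, u', by rw [hNT]; exact Set.ncard_singleton _, hTadj, hℓu'⟩
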